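/- The function W : ℝ → ℝ₊ is continuous, satisfies W(x) = W(2π − x) for all x (parity symmetry), and there exist constants c₁, c₂ > 0 such that c₁ |sin(x/2)|^{5/3} ≤ W(x) ≤ c₂ |sin(x/2)|^{5/3} for all x ∈ ℝ. Moreover lim_{x→0} |sin(x/2)|^{−5/3} W(x) = w₀, where w₀ = 4 ∫₀^∞ (2s + s⁴)^{−1/2} ds ∈ (0,∞). -/

import Mathlib

open MeasureTheory Real Set Filter
open scoped Topology ENNReal ComplexConjugate

set_option maxHeartbeats 1000000

noncomputable section

/-- The fundamental periodic cell `I = [0, 2π)`. -/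
def II : Set ℝ := Set.Ico 0 (2 * π)

/-- Lebesgue measure restricted to `I`. -/
def muI : Measure ℝ := volume.restrict II

/-- The dispersion relation `ω(x) = |sin(x/2)|`. -/
def omg (x : ℝ) : ℝ := |Real.sin (x / 2)|

/-- `Ω(x,y,z) = ω(x) + ω(y) − ω(z) − ω(x+y−z)`. -/
def Omg (x y z : ℝ) : ℝ := omg x + omg y - omg z - omg (x + y - z)

/-- The representative of `x` modulo `2π` lying in `[0, 2π)`. -/
def mod2pi (x : ℝ) : ℝ := x - 2 * π * (⌊x / (2 * π)⌋ : ℝ)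

/-- `h` on the fundamental cell: `h(x,z) = (z−x)/2 + 2 arcsin( tan(|z−x|/4) cos((x+z)/4) )`. -/
def h0 (x z : ℝ) : ℝ :=
  (z - x) / 2 + 2 * Real.arcsin (Real.tan (|z - x| / 4) * Real.cos ((x + z) / 4))

/-- The extension of `h` to all of `ℝ²`: `h(x,z) = h(x mod 2π, z mod 2π) − (x − (x mod 2π))`. -/
def hFPU (x z : ℝ) : ℝ := h0 (mod2pi x) (mod2pi z) - (x - mod2pi x)

/-- `F₊(x,y) = (cos(x/2)+cos(y/2))² + 4 sin(x/2) sin(y/2)`. -/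
def Fp (x y : ℝ) : ℝ :=
  (Real.cos (x / 2) + Real.cos (y / 2)) ^ 2 + 4 * Real.sin (x / 2) * Real.sin (y / 2)

/-- `F₋(x,y) = (cos(x/2)+cos(y/2))² − 4 sin(x/2) sin(y/2)`. -/
def Fm (x y : ℝ) : ℝ :=
  (Real.cos (x / 2) + Real.cos (y / 2)) ^ 2 - 4 * Real.sin (x / 2) * Real.sin (y / 2)

/-- The kernel `K₁(x,y) = 4·𝟙(F₋(x,y) > 0)/√(F₋(x,y))`. -/
def K1 (x y : ℝ) : ℝ := if 0 < Fm x y then 4 / Real.sqrt (Fm x y) else 0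

/-- The kernel `K₂(x,y) = 2/√(F₊(x,y))`. -/
def K2 (x y : ℝ) : ℝ := 2 / Real.sqrt (Fp x y)

/-- `V(x) = ∫_I K₂(x,y) dy`. -/
def VV (x : ℝ) : ℝ := ∫ y in II, K2 x y

/-- `W(x) = sin²(x/2)·V(x)`. -/
def WW (x : ℝ) : ℝ := Real.sin (x / 2) ^ 2 * VV x

/-- The `2π`-periodic extension of `W` to `ℝ`. -/
def Wper (x : ℝ) : ℝ := WW (mod2pi x)

/-- The constant `w₀ = 4 ∫₀^∞ (2s + s⁴)^{−1/2} ds`. -/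
def w0 : ℝ := 4 * ∫ s in Set.Ioi (0 : ℝ), (2 * s + s ^ 4) ^ (-(1 : ℝ) / 2)


lemma mod2pi_eq_fract (x : ℝ) : mod2pi x = 2 * π * Int.fract (x / (2 * π)) := by
  unfold mod2pi Int.fract
  field_simp

lemma mod2pi_mem (x : ℝ) : mod2pi x ∈ II := by
  rw [mod2pi_eq_fract]
  constructor
  · exact mul_nonneg (by positivity) (Int.fract_nonneg _)
  · have h := Int.fract_lt_one (x / (2 * π))
    nlinarith [Real.two_pi_pos, Int.fract_nonneg (x / (2 * π))]

lemma mod2pi_eq_self {x : ℝ} (hx : x ∈ II) : mod2pi x = x := by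
  rw [mod2pi_eq_fract, Int.fract]
  have h0 : ⌊x / (2 * π)⌋ = 0 := by
    rw [Int.floor_eq_zero_iff]
    obtain ⟨h1, h2⟩ := hx
    exact ⟨div_nonneg h1 Real.two_pi_pos.le, by rw [div_lt_one Real.two_pi_pos]; exact h2⟩
  rw [h0]
  push_cast
  field_simp
  ring

lemma mod2pi_add_int (x : ℝ) (k : ℤ) : mod2pi (x + 2 * π * k) = mod2pi x := by
  rw [mod2pi_eq_fract, mod2pi_eq_fract]
  have : (x + 2 * π * k) / (2 * π) = (k : ℝ) + x / (2 * π) := by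
    field_simp; ring
  rw [this, Int.fract_intCast_add]

lemma Wper_add (x : ℝ) : Wper (x + 2 * π) = Wper x := by
  unfold Wper
  rw [show x + 2 * π = x + 2 * π * ((1:ℤ):ℝ) by push_cast; ring, mod2pi_add_int]

lemma abs_sin_mod2pi (x : ℝ) : |Real.sin (mod2pi x / 2)| = |Real.sin (x / 2)| := by
  have h : mod2pi x / 2 = x / 2 + (-⌊x / (2 * π)⌋ : ℤ) * π := by
    unfold mod2pi; push_cast; ring
  rw [h, Real.sin_antiperiodic.add_int_mul_eq, abs_mul]
  have hu : ∀ u : ℤˣ, |((u : ℤ) : ℝ)| = 1 := fun u => by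
    rcases Int.units_eq_one_or u with h | h <;> simp [h]
  rw [hu]
  ring

lemma cos_lt_one_of_mem {A : ℝ} (h0 : 0 < A) (h2 : A < π) : Real.cos A < 1 := by
  have hs : 0 < Real.sin (A / 2) :=
    Real.sin_pos_of_pos_of_lt_pi (by linarith) (by linarith [Real.pi_pos])
  have e : Real.sin (A / 2) ^ 2 = 1 / 2 - Real.cos A / 2 := by
    have := Real.sin_sq_eq_half_sub (A / 2)
    rwa [show 2 * (A / 2) = A by ring] at this
  nlinarith

lemma neg_one_lt_cos_of_mem {A : ℝ} (h0 : 0 < A) (h2 : A < π) : -1 < Real.cos A := by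
  have hc : 0 < Real.cos (A / 2) :=
    Real.cos_pos_of_mem_Ioo ⟨by linarith [Real.pi_pos], by linarith⟩
  have e : Real.cos (A / 2) ^ 2 = 1 / 2 + Real.cos A / 2 := by
    have := Real.cos_sq (A / 2)
    rwa [show 2 * (A / 2) = A by ring] at this
  nlinarith

lemma Fp_pos {x y : ℝ} (hx : x ∈ Ioo 0 (2 * π)) (hy : y ∈ Icc 0 (2 * π)) :
    0 < Fp x y := by
  obtain ⟨hx0, hx2⟩ := hx
  obtain ⟨hy0, hy2⟩ := hy
  have hxs : 0 < Real.sin (x / 2) :=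
    Real.sin_pos_of_pos_of_lt_pi (by linarith) (by linarith)
  have hys : 0 ≤ Real.sin (y / 2) :=
    Real.sin_nonneg_of_nonneg_of_le_pi (by linarith) (by linarith)
  rcases lt_or_eq_of_le hys with hys' | hys'
  · unfold Fp; nlinarith [sq_nonneg (Real.cos (x / 2) + Real.cos (y / 2))]
  · have hcx1 : Real.cos (x / 2) < 1 := cos_lt_one_of_mem (by linarith) (by linarith)
    have hcx2 : -1 < Real.cos (x / 2) := neg_one_lt_cos_of_mem (by linarith) (by linarith)
    have hy' : y = 0 ∨ y = 2 * π := by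
      rcases eq_or_lt_of_le hy0 with h | h
      · exact Or.inl h.symm
      · rcases eq_or_lt_of_le hy2 with h2 | h2
        · exact Or.inr h2
        · exfalso
          have : 0 < Real.sin (y / 2) :=
            Real.sin_pos_of_pos_of_lt_pi (by linarith) (by linarith)
          rw [← hys'] at this; linarith
    unfold Fp
    rcases hy' with rfl | rfl
    · simp only [zero_div, Real.cos_zero, Real.sin_zero]
      nlinarith
    · have h1 : Real.cos (2 * π / 2) = -1 := by
        rw [show (2:ℝ) * π / 2 = π by ring, Real.cos_pi]
      rw [h1, ← hys']
      nlinarith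

lemma Fp_reflect (x u : ℝ) :
    Fp x (2 * π - u) = (Real.cos (x / 2) - Real.cos (u / 2)) ^ 2
      + 4 * Real.sin (x / 2) * Real.sin (u / 2) := by
  unfold Fp
  rw [show (2 * π - u) / 2 = π - u / 2 by ring, Real.cos_pi_sub, Real.sin_pi_sub]
  ring

lemma Fp_reflect2 (x y : ℝ) : Fp (2 * π - x) (2 * π - y) = Fp x y := by
  unfold Fp
  rw [show (2 * π - x) / 2 = π - x / 2 by ring, show (2 * π - y) / 2 = π - y / 2 by ring,
    Real.cos_pi_sub, Real.sin_pi_sub, Real.cos_pi_sub, Real.sin_pi_sub]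
  ring

lemma K2_nonneg (x y : ℝ) : 0 ≤ K2 x y := by
  unfold K2; positivity

lemma K2_meas (x : ℝ) : Measurable (K2 x) := by
  unfold K2 Fp
  exact (measurable_const.div ((Real.continuous_sqrt.comp (by continuity)).measurable))

lemma VV_nonneg (x : ℝ) : 0 ≤ VV x :=
  MeasureTheory.integral_nonneg (fun y => K2_nonneg x y)

lemma Wper_nonneg (x : ℝ) : 0 ≤ Wper x := by
  unfold Wper WW
  exact mul_nonneg (sq_nonneg _) (VV_nonneg _)

lemma Fp_continuous : Continuous (fun p : ℝ × ℝ => Fp p.1 p.2) := by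
  unfold Fp; continuity

/-- joint lower bound for `Fp` on compact boxes inside `(0,2π) × [0,2π]`. -/
lemma Fp_lower {a b : ℝ} (ha : 0 < a) (hb : b < 2 * π) (hab : a ≤ b) :
    ∃ m > 0, ∀ x ∈ Icc a b, ∀ y ∈ Icc 0 (2 * π), m ≤ Fp x y := by
  have hcomp : IsCompact (Icc a b ×ˢ Icc (0:ℝ) (2 * π)) :=
    (isCompact_Icc).prod isCompact_Icc
  have hne : (Icc a b ×ˢ Icc (0:ℝ) (2 * π)).Nonempty :=
    ⟨(a, 0), Set.mk_mem_prod ⟨le_rfl, hab⟩ ⟨le_rfl, Real.two_pi_pos.le⟩⟩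
  obtain ⟨p, hp, hmin⟩ := hcomp.exists_isMinOn hne (Fp_continuous.continuousOn)
  refine ⟨Fp p.1 p.2, ?_, fun x hx y hy => isMinOn_iff.1 hmin (x, y) (Set.mk_mem_prod hx hy)⟩
  exact Fp_pos ⟨lt_of_lt_of_le ha hp.1.1, lt_of_le_of_lt hp.1.2 hb⟩ hp.2

lemma volume_II : volume II = ENNReal.ofReal (2 * π) := by
  unfold II; rw [Real.volume_Ico, sub_zero]

instance : IsFiniteMeasure (volume.restrict II) := by
  constructor
  rw [MeasureTheory.Measure.restrict_apply_univ, volume_II]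
  exact ENNReal.ofReal_lt_top

lemma K2_integrableOn {x : ℝ} (hx : x ∈ Ioo 0 (2 * π)) : IntegrableOn (K2 x) II := by
  obtain ⟨m, hm, hbd⟩ := Fp_lower hx.1 hx.2 le_rfl
  refine MeasureTheory.Integrable.mono' (g := fun _ => 2 / Real.sqrt m)
    (MeasureTheory.integrable_const _) ((K2_meas x).aestronglyMeasurable) ?_
  refine (MeasureTheory.ae_restrict_iff' (by unfold II; exact measurableSet_Ico)).2 ?_
  filter_upwards with y hy
  have hFp := hbd x ⟨le_rfl, le_rfl⟩ y ⟨hy.1, hy.2.le⟩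
  rw [Real.norm_eq_abs, abs_of_nonneg (K2_nonneg x y)]
  unfold K2
  exact div_le_div_of_nonneg_left (by norm_num) (Real.sqrt_pos.2 hm)
    (Real.sqrt_le_sqrt hFp)

lemma VV_lower {x : ℝ} (hx : x ∈ Ioo 0 (2 * π)) : π ≤ VV x := by
  have hle : ∀ y ∈ II, (1:ℝ) / 2 ≤ K2 x y := by
    intro y hy
    have hpos : 0 < Fp x y := Fp_pos hx ⟨hy.1, hy.2.le⟩
    have hle8 : Fp x y ≤ 8 := by
      unfold Fp
      nlinarith [Real.neg_one_le_cos (x/2), Real.cos_le_one (x/2), Real.neg_one_le_cos (y/2),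
        Real.cos_le_one (y/2), Real.neg_one_le_sin (x/2), Real.sin_le_one (x/2),
        Real.neg_one_le_sin (y/2), Real.sin_le_one (y/2)]
    have h1 : Real.sqrt (Fp x y) ≤ Real.sqrt 8 := Real.sqrt_le_sqrt hle8
    have h2 : Real.sqrt 8 < 4 := by
      rw [show (4:ℝ) = Real.sqrt 16 by rw [show (16:ℝ) = 4^2 by norm_num, Real.sqrt_sq]; norm_num]
      exact Real.sqrt_lt_sqrt (by norm_num) (by norm_num)
    unfold K2
    rw [div_le_div_iff₀ (by norm_num) (Real.sqrt_pos.2 hpos)]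
    nlinarith [Real.sqrt_nonneg (Fp x y)]
  have : ∫ y in II, (1:ℝ)/2 ≤ ∫ y in II, K2 x y := by
    refine MeasureTheory.setIntegral_mono_on (MeasureTheory.integrable_const _)
      (K2_integrableOn hx) (by unfold II; exact measurableSet_Ico) hle
  have hconst : ∫ y in II, (1:ℝ)/2 = π := by
    rw [MeasureTheory.setIntegral_const, measureReal_def, volume_II, smul_eq_mul,
      ENNReal.toReal_ofReal Real.two_pi_pos.le]
    ring
  unfold VV
  linarith [hconst ▸ this]

lemma VV_eq_interval (x : ℝ) : VV x = ∫ y in (0:ℝ)..(2 * π), K2 x y := by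
  unfold VV II
  rw [intervalIntegral.integral_of_le Real.two_pi_pos.le,
    MeasureTheory.integral_Ico_eq_integral_Ioo, MeasureTheory.integral_Ioc_eq_integral_Ioo]

lemma VV_reflect (x : ℝ) : VV x = ∫ u in (0:ℝ)..(2 * π), K2 x (2 * π - u) := by
  rw [VV_eq_interval]
  have h := intervalIntegral.integral_comp_sub_left (a := 0) (b := 2 * π) (K2 x) (2 * π)
  simp only [sub_self, sub_zero] at h
  exact h.symm

lemma VV_sym (x : ℝ) : VV (2 * π - x) = VV x := by
  rw [VV_reflect (2 * π - x), VV_eq_interval x]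
  congr 1
  funext u
  unfold K2
  rw [Fp_reflect2]

lemma WW_sym (x : ℝ) : WW (2 * π - x) = WW x := by
  unfold WW
  rw [VV_sym, show (2 * π - x) / 2 = π - x / 2 by ring, Real.sin_pi_sub]

lemma Wper_sym (x : ℝ) : Wper (2 * π - x) = Wper x := by
  unfold Wper
  have hx : x = mod2pi x + 2 * π * (⌊x / (2 * π)⌋ : ℝ) := by unfold mod2pi; ring
  have key : mod2pi (2 * π - x) = mod2pi (2 * π - mod2pi x) := by
    conv_lhs => rw [hx]
    rw [show 2 * π - (mod2pi x + 2 * π * (⌊x / (2 * π)⌋ : ℝ))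
        = (2 * π - mod2pi x) + 2 * π * ((-⌊x / (2 * π)⌋ : ℤ) : ℝ) by push_cast; ring,
      mod2pi_add_int]
  rw [key]
  rcases eq_or_lt_of_le (mod2pi_mem x).1 with h0 | h0
  · rw [← h0, sub_zero, show (2:ℝ) * π = 0 + 2 * π * ((1:ℤ):ℝ) by push_cast; ring,
      mod2pi_add_int]
    rw [mod2pi_eq_self (by exact ⟨le_rfl, Real.two_pi_pos⟩)]
  · have hmem : 2 * π - mod2pi x ∈ II :=
      ⟨by linarith [(mod2pi_mem x).2], by linarith⟩
    rw [mod2pi_eq_self hmem, WW_sym]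

lemma Wper_even (x : ℝ) : Wper (-x) = Wper x := by
  rw [← Wper_sym (-x), show 2 * π - -x = x + 2 * π by ring, Wper_add]

lemma VV_continuousAt {x₀ : ℝ} (hx : x₀ ∈ Ioo 0 (2 * π)) : ContinuousAt VV x₀ := by
  obtain ⟨hx0, hx2⟩ := hx
  have hax : x₀ / 2 < x₀ := by linarith
  have hxb : x₀ < x₀ / 2 + π := by linarith [Real.pi_pos]
  obtain ⟨m, hm, hbd⟩ := Fp_lower (a := x₀ / 2) (b := x₀ / 2 + π) (by linarith)
    (by linarith) (by linarith [Real.pi_pos])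
  have : ContinuousAt (fun x => ∫ y in II, K2 x y) x₀ := by
    refine MeasureTheory.continuousAt_of_dominated
      (bound := fun _ => 2 / Real.sqrt m) ?_ ?_ (MeasureTheory.integrable_const _) ?_
    · filter_upwards with x
      exact (K2_meas x).aestronglyMeasurable
    · filter_upwards [Icc_mem_nhds hax hxb] with x hxab
      refine (MeasureTheory.ae_restrict_iff' (by unfold II; exact measurableSet_Ico)).2 ?_
      filter_upwards with y hy
      have hFp := hbd x hxab y ⟨hy.1, hy.2.le⟩
      rw [Real.norm_eq_abs, abs_of_nonneg (K2_nonneg x y)]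
      unfold K2
      exact div_le_div_of_nonneg_left (by norm_num) (Real.sqrt_pos.2 hm)
        (Real.sqrt_le_sqrt hFp)
    · refine (MeasureTheory.ae_restrict_iff' (by unfold II; exact measurableSet_Ico)).2 ?_
      filter_upwards with y hy
      have hFp : 0 < Fp x₀ y := Fp_pos ⟨hx0, hx2⟩ ⟨hy.1, hy.2.le⟩
      unfold K2
      exact continuousAt_const.div
        (Real.continuous_sqrt.continuousAt.comp
          ((Fp_continuous.comp (continuous_id.prodMk continuous_const)).continuousAt))
        (Real.sqrt_pos.2 hFp).ne'
  exact this

lemma WW_continuousAt {x₀ : ℝ} (hx : x₀ ∈ Ioo 0 (2 * π)) : ContinuousAt WW x₀ := by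
  unfold WW
  exact (((Real.continuous_sin.comp (continuous_id.div_const 2)).pow 2).continuousAt).mul
    (VV_continuousAt hx)

/-- `ε(x) = sin(x/2)`. -/
def epsW (x : ℝ) : ℝ := Real.sin (x / 2)

/-- `μ(x) = sin(x/2)^{1/3}`. -/
def muW (x : ℝ) : ℝ := Real.sin (x / 2) ^ ((1:ℝ)/3)

/-- The limiting profile. -/
def phiW (s : ℝ) : ℝ := 2 / Real.sqrt (2 * s + s ^ 4 / 64)

/-- The rescaled integrand. -/
def GW (x : ℝ) : ℝ → ℝ :=
  Set.indicator (Set.Ioc 0 (2 * π / muW x))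
    (fun s => muW x ^ 2 * K2 x (2 * π - muW x * s))

/-- The dominating function. -/
def GbW (s : ℝ) : ℝ := if s ≤ 1 then Real.sqrt π / Real.sqrt s else 16 * π ^ 2 / s ^ 2

lemma GbW_nonneg (s : ℝ) : 0 ≤ GbW s := by
  unfold GbW; split <;> positivity

lemma sinx2_pos {x : ℝ} (hx0 : 0 < x) (hx1 : x ≤ 1/6) : 0 < Real.sin (x / 2) :=
  Real.sin_pos_of_pos_of_lt_pi (by linarith) (by nlinarith [Real.pi_gt_three])

lemma sinx2_ge {x : ℝ} (hx0 : 0 < x) (hx1 : x ≤ 1/6) : x / π ≤ Real.sin (x / 2) := by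
  have := Real.mul_le_sin (x := x/2) (by linarith) (by nlinarith [Real.pi_gt_three])
  calc x / π = 2 / π * (x / 2) := by field_simp
  _ ≤ Real.sin (x / 2) := this

lemma mu_pos {x : ℝ} (hx0 : 0 < x) (hx1 : x ≤ 1/6) : 0 < muW x :=
  Real.rpow_pos_of_pos (sinx2_pos hx0 hx1) _

lemma mu_cube {x : ℝ} (hx0 : 0 < x) (hx1 : x ≤ 1/6) : muW x ^ 3 = Real.sin (x / 2) := by
  unfold muW
  rw [← Real.rpow_natCast (Real.sin (x/2) ^ ((1:ℝ)/3)) 3,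
    ← Real.rpow_mul (le_of_lt (sinx2_pos hx0 hx1))]
  norm_num

lemma mu_le_one {x : ℝ} (hx0 : 0 < x) (hx1 : x ≤ 1/6) : muW x ≤ 1 :=
  Real.rpow_le_one (le_of_lt (sinx2_pos hx0 hx1)) (Real.sin_le_one _) (by norm_num)

lemma two_x_le_mu {x : ℝ} (hx0 : 0 < x) (hx1 : x ≤ 1/6) : 2 * x ≤ muW x := by
  have h3 : (2*x)^3 ≤ muW x ^ 3 := by
    rw [mu_cube hx0 hx1]
    have h1 := sinx2_ge hx0 hx1
    have hpi : π ≤ 4 := Real.pi_le_four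
    have h2 : x / 4 ≤ x / π := by
      apply div_le_div_of_nonneg_left hx0.le Real.pi_pos hpi
    nlinarith [mul_pos hx0 hx0, mul_pos (mul_pos hx0 hx0) hx0]
  by_contra hcon
  push_neg at hcon
  have := pow_lt_pow_left₀ hcon (mu_pos hx0 hx1).le (by norm_num : 3 ≠ 0)
  linarith

lemma K2_le {z y c : ℝ} (hc : 0 < c) (h : c ^ 2 ≤ Fp z y) : K2 z y ≤ 2 / c := by
  unfold K2
  refine div_le_div_of_nonneg_left (by norm_num) hc ?_
  rw [← Real.sqrt_sq hc.le]
  exact Real.sqrt_le_sqrt h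

lemma GW_bound {x : ℝ} (hx0 : 0 < x) (hx1 : x ≤ 1/6) {s : ℝ} (hs : 0 < s) :
    GW x s ≤ GbW s := by
  have hmu := mu_pos hx0 hx1
  have hmu1 := mu_le_one hx0 hx1
  have heps := sinx2_pos hx0 hx1
  have hpi3 := Real.pi_gt_three
  by_cases hmem : s ∈ Set.Ioc 0 (2 * π / muW x)
  · unfold GW
    rw [Set.indicator_of_mem hmem]
    obtain ⟨u, hu⟩ : ∃ u, u = muW x * s := ⟨_, rfl⟩
    rw [← hu]
    have hu0 : 0 < u := by rw [hu]; exact mul_pos hmu hs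
    have hu' : u ≠ 0 := hu0.ne'
    have hπ' : π ≠ 0 := Real.pi_ne_zero
    have hs' : s ≠ 0 := hs.ne'
    have hmu' : muW x ≠ 0 := hmu.ne'
    have hule : u ≤ 2 * π := by
      rw [hu]
      calc muW x * s ≤ muW x * (2 * π / muW x) := by
            exact mul_le_mul_of_nonneg_left hmem.2 hmu.le
      _ = 2 * π := by field_simp
    have hFpr := Fp_reflect x u
    have hsin_u : 0 ≤ Real.sin (u / 2) :=
      Real.sin_nonneg_of_nonneg_of_le_pi (by linarith) (by linarith)
    by_cases hs1 : s ≤ 1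
    · -- small s : bound by √π/√s
      have huπ : u ≤ 1 := by
        calc u = muW x * s := hu
        _ ≤ 1 * 1 := mul_le_mul hmu1 hs1 hs.le (by norm_num)
        _ = 1 := by norm_num
      have hsin : u / π ≤ Real.sin (u / 2) := by
        have := Real.mul_le_sin (x := u/2) (by linarith) (by linarith)
        calc u / π = 2 / π * (u / 2) := by field_simp
        _ ≤ Real.sin (u / 2) := this
      have hF : (2 * muW x ^ 2) ^ 2 * (s / π) ≤ Fp x (2 * π - u) := by
        rw [hFpr]
        have h1 : (2 * muW x ^ 2) ^ 2 * (s / π) = 4 * (muW x ^ 3) * (u / π) := by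
          rw [hu]; field_simp; ring
        rw [h1, mu_cube hx0 hx1]
        nlinarith [sq_nonneg (Real.cos (x/2) - Real.cos (u/2)),
          mul_le_mul_of_nonneg_left hsin
            (by nlinarith : (0:ℝ) ≤ 4 * Real.sin (x / 2))]
      have hKle := K2_le (c := 2 * muW x ^ 2 * Real.sqrt (s / π))
        (mul_pos (by positivity) (Real.sqrt_pos.2 (by positivity))) (by
        calc (2 * muW x ^ 2 * Real.sqrt (s / π)) ^ 2
            = (2 * muW x ^ 2) ^ 2 * (Real.sqrt (s/π)) ^ 2 := by ring
          _ = (2 * muW x ^ 2) ^ 2 * (s / π) := by rw [Real.sq_sqrt (by positivity)]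
          _ ≤ Fp x (2 * π - u) := hF)
      unfold GbW
      rw [if_pos hs1]
      calc muW x ^ 2 * K2 x (2 * π - u)
          ≤ muW x ^ 2 * (2 / (2 * muW x ^ 2 * Real.sqrt (s / π))) := by
            exact mul_le_mul_of_nonneg_left hKle (by positivity)
        _ = 1 / Real.sqrt (s / π) := by field_simp
        _ = Real.sqrt π / Real.sqrt s := by
            rw [Real.sqrt_div hs.le π, one_div_div]
    · push_neg at hs1
      by_cases huπ : u ≤ π
      · -- middle region: quartic lower bound
        have h2xu : 2 * x ≤ u := by
          calc 2 * x ≤ muW x := two_x_le_mu hx0 hx1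
          _ = muW x * 1 := by ring
          _ ≤ muW x * s := mul_le_mul_of_nonneg_left hs1.le hmu.le
          _ = u := hu.symm
        have hcd : Real.cos (x/2) - Real.cos (u/2)
            = 2 * Real.sin ((x + u)/4) * Real.sin ((u - x)/4) := by
          rw [Real.cos_sub_cos]
          rw [show (x/2 + u/2)/2 = (x+u)/4 by ring, show (x/2 - u/2)/2 = -((u-x)/4) by ring,
            Real.sin_neg]
          ring
        have hb1 : u / (2*π) ≤ Real.sin ((x + u)/4) := by
          have h := Real.mul_le_sin (x := (x+u)/4) (by linarith) (by linarith)
          calc u / (2*π) ≤ (x + u)/(2*π) := by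
                apply div_le_div_of_nonneg_right ?_ (by positivity); linarith
          _ = 2/π * ((x+u)/4) := by field_simp; ring
          _ ≤ Real.sin ((x+u)/4) := h
        have hb2 : u / (4*π) ≤ Real.sin ((u - x)/4) := by
          have h := Real.mul_le_sin (x := (u-x)/4) (by linarith) (by linarith)
          calc u / (4*π) ≤ (u - x)/(2*π) := by
                rw [div_le_div_iff₀ (by positivity) (by positivity)]
                nlinarith
          _ = 2/π * ((u-x)/4) := by field_simp; ring
          _ ≤ Real.sin ((u-x)/4) := h
        have hcd2 : u^2/(4*π^2) ≤ Real.cos (x/2) - Real.cos (u/2) := by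
          rw [hcd]
          have hp2 : (0:ℝ) ≤ u/(4*π) := by positivity
          have hp1 : (0:ℝ) ≤ u/(2*π) := by positivity
          have hmm := mul_le_mul hb1 hb2 hp2 (le_trans hp1 hb1)
          have he : u^2/(4*π^2) = 2*(u/(2*π)*(u/(4*π))) := by field_simp
          nlinarith [hmm]
        have hF : (u^2/(4*π^2))^2 ≤ Fp x (2*π - u) := by
          rw [hFpr]
          have h1 : (u^2/(4*π^2))^2 ≤ (Real.cos (x/2) - Real.cos (u/2))^2 :=
            pow_le_pow_left₀ (by positivity) hcd2 2
          nlinarith [mul_nonneg (mul_nonneg (by norm_num : (0:ℝ) ≤ 4) heps.le) hsin_u]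
        have hKle := K2_le (c := u^2/(4*π^2)) (by positivity) hF
        unfold GbW
        rw [if_neg (by linarith)]
        calc muW x ^ 2 * K2 x (2*π - u) ≤ muW x ^ 2 * (2/(u^2/(4*π^2))) :=
              mul_le_mul_of_nonneg_left hKle (by positivity)
        _ = 8 * π^2 * muW x ^ 2 / u^2 := by field_simp; ring
        _ = 8 * π^2 / s^2 := by rw [hu]; field_simp
        _ ≤ 16 * π^2 / s^2 := by
            apply div_le_div_of_nonneg_right ?_ (by positivity)
            nlinarith
      · -- outer region
        push_neg at huπ
        have hcos_u : Real.cos (u/2) ≤ 0 :=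
          Real.cos_nonpos_of_pi_div_two_le_of_le (by linarith) (by linarith)
        have hcos_x : (1:ℝ)/2 ≤ Real.cos (x/2) := by
          have := Real.one_sub_sq_div_two_le_cos (x := x/2)
          nlinarith
        have hF : ((1:ℝ)/2)^2 ≤ Fp x (2*π - u) := by
          rw [hFpr]
          nlinarith [mul_nonneg (mul_nonneg (by norm_num : (0:ℝ) ≤ 4) heps.le) hsin_u]
        have hKle := K2_le (c := (1:ℝ)/2) (by norm_num) hF
        have hmus : muW x ≤ 2 * π / s := by
          rw [le_div_iff₀ hs]
          have := hmem.2
          rw [le_div_iff₀ hmu] at this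
          linarith [this]
        unfold GbW
        rw [if_neg (by linarith)]
        calc muW x ^ 2 * K2 x (2*π - u) ≤ muW x ^ 2 * 4 := by
              have : (2:ℝ) / (1/2) = 4 := by norm_num
              rw [← this]
              exact mul_le_mul_of_nonneg_left hKle (by positivity)
        _ ≤ (2*π/s)^2 * 4 := by
              apply mul_le_mul_of_nonneg_right ?_ (by norm_num)
              exact pow_le_pow_left₀ hmu.le hmus 2
        _ = 16 * π^2 / s^2 := by field_simp; ring
  · unfold GW
    rw [Set.indicator_of_notMem hmem]
    exact GbW_nonneg s

lemma GW_nonneg (x s : ℝ) : 0 ≤ GW x s := by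
  unfold GW
  apply Set.indicator_nonneg
  intro t _
  exact mul_nonneg (by positivity) (K2_nonneg _ _)

lemma GbW_integrable : IntegrableOn GbW (Ioi (0:ℝ)) := by
  rw [← Set.Ioc_union_Ioi_eq_Ioi (by norm_num : (0:ℝ) ≤ 1)]
  apply MeasureTheory.IntegrableOn.union
  · have h1 : IntegrableOn (fun s : ℝ => Real.sqrt π * s ^ (-(1:ℝ)/2)) (Ioc 0 1) := by
      have h := intervalIntegral.intervalIntegrable_rpow' (a := 0) (b := 1)
        (r := -(1:ℝ)/2) (by norm_num)
      rw [intervalIntegrable_iff_integrableOn_Ioc_of_le (by norm_num)] at h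
      exact h.const_mul _
    refine h1.congr_fun ?_ measurableSet_Ioc
    intro s hs
    show Real.sqrt π * s ^ (-(1:ℝ)/2) = GbW s
    unfold GbW
    rw [if_pos hs.2]
    rw [show -(1:ℝ)/2 = -(1/2) by norm_num, Real.rpow_neg hs.1.le, ← Real.sqrt_eq_rpow]
    rw [div_eq_mul_inv]
  · have h1 : IntegrableOn (fun s : ℝ => 16 * π^2 * s ^ (-(2:ℝ))) (Ioi 1) := by
      exact ((integrableOn_Ioi_rpow_iff (by norm_num : (0:ℝ) < 1)).2
        (by norm_num : (-2:ℝ) < -1)).const_mul _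
    refine h1.congr_fun ?_ measurableSet_Ioi
    intro s hs
    simp only [Set.mem_Ioi] at hs
    show 16 * π^2 * s ^ (-(2:ℝ)) = GbW s
    unfold GbW
    rw [if_neg (by linarith)]
    rw [show (-2:ℝ) = -((2:ℕ):ℝ) by norm_num, Real.rpow_neg (by linarith),
      Real.rpow_natCast]
    rw [div_eq_mul_inv]

lemma w_integrand_integrable :
    IntegrableOn (fun s : ℝ => (2 * s + s ^ 4) ^ (-(1:ℝ)/2)) (Set.Ioi 0) := by
  rw [← Set.Ioc_union_Ioi_eq_Ioi (by norm_num : (0:ℝ) ≤ 1)]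
  have hcont : ∀ s : ℝ, 0 < s →
      ContinuousAt (fun t : ℝ => (2 * t + t ^ 4) ^ (-(1:ℝ)/2)) s := by
    intro s hs
    have hpos : 0 < 2 * s + s ^ 4 := by positivity
    have hc2 : ContinuousAt (fun t : ℝ => 2 * t + t ^ 4) s :=
      ((continuous_const.mul continuous_id).add (continuous_pow 4)).continuousAt
    have hcomp := ContinuousAt.comp (x := s) (g := fun y : ℝ => y ^ (-(1:ℝ)/2))
      (Real.continuousAt_rpow_const _ _ (Or.inl hpos.ne')) hc2
    exact hcomp
  have hmeas : ∀ (t : Set ℝ), MeasurableSet t → t ⊆ Set.Ioi 0 →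
      AEStronglyMeasurable (fun s : ℝ => (2 * s + s ^ 4) ^ (-(1:ℝ)/2)) (volume.restrict t) := by
    intro t ht hsub
    refine ContinuousOn.aestronglyMeasurable (fun s hst => ?_) ht
    exact (hcont s (hsub hst)).continuousWithinAt
  have hnn : ∀ s : ℝ, 0 < s → 0 ≤ (2 * s + s ^ 4) ^ (-(1:ℝ)/2) := by
    intro s hs
    exact Real.rpow_nonneg (by positivity) _
  apply MeasureTheory.IntegrableOn.union
  · have h1 : IntegrableOn (fun s : ℝ => s ^ (-(1:ℝ)/2)) (Ioc 0 1) := by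
      have h := intervalIntegral.intervalIntegrable_rpow' (a := 0) (b := 1)
        (r := -(1:ℝ)/2) (by norm_num)
      rwa [intervalIntegrable_iff_integrableOn_Ioc_of_le (by norm_num)] at h
    refine MeasureTheory.Integrable.mono' h1
      (hmeas _ measurableSet_Ioc Set.Ioc_subset_Ioi_self) ?_
    refine (MeasureTheory.ae_restrict_iff' measurableSet_Ioc).2 ?_
    filter_upwards with s hs
    rw [Real.norm_eq_abs, abs_of_nonneg (hnn s hs.1)]
    have h1 : s ≤ 2 * s + s ^ 4 := by nlinarith [hs.1, pow_pos hs.1 4]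
    have hpos : (0:ℝ) ≤ 2 * s + s ^ 4 := by nlinarith [hs.1, pow_pos hs.1 4]
    rw [show -(1:ℝ)/2 = -(1/2) by norm_num, Real.rpow_neg hpos,
      Real.rpow_neg hs.1.le]
    apply inv_anti₀
    · exact Real.rpow_pos_of_pos hs.1 _
    · exact Real.rpow_le_rpow hs.1.le h1 (by norm_num)
  · have h1 : IntegrableOn (fun s : ℝ => s ^ (-(2:ℝ))) (Ioi 1) :=
      (integrableOn_Ioi_rpow_iff (by norm_num : (0:ℝ) < 1)).2 (by norm_num : (-2:ℝ) < -1)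
    refine MeasureTheory.Integrable.mono' h1
      (hmeas _ measurableSet_Ioi (fun s (hs : s ∈ Ioi (1:ℝ)) => show (0:ℝ) < s from lt_trans one_pos hs)) ?_
    refine (MeasureTheory.ae_restrict_iff' measurableSet_Ioi).2 ?_
    filter_upwards with s hs
    simp only [Set.mem_Ioi] at hs
    have hs0 : (0:ℝ) < s := lt_trans one_pos hs
    rw [Real.norm_eq_abs, abs_of_nonneg (hnn s hs0)]
    have h4 : (s ^ (4:ℕ) : ℝ) ^ (-(1:ℝ)/2) = s ^ (-(2:ℝ)) := by
      rw [← Real.rpow_natCast s 4, ← Real.rpow_mul hs0.le]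
      norm_num
    rw [← h4]
    have h1 : (s:ℝ) ^ (4:ℕ) ≤ 2 * s + s ^ 4 := by nlinarith
    rw [show -(1:ℝ)/2 = -(1/2) by norm_num, Real.rpow_neg (by positivity),
      Real.rpow_neg (by positivity)]
    apply inv_anti₀
    · exact Real.rpow_pos_of_pos (by positivity) _
    · exact Real.rpow_le_rpow (by positivity) h1 (by norm_num)

lemma w0_pos : 0 < w0 := by
  unfold w0
  have hint := w_integrand_integrable
  have h1 : ∫ s in Set.Ioc (1:ℝ) 2, ((20:ℝ)) ^ (-(1:ℝ)/2)
      ≤ ∫ s in Set.Ioc (1:ℝ) 2, (2 * s + s ^ 4) ^ (-(1:ℝ)/2) := by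
    refine MeasureTheory.setIntegral_mono_on (MeasureTheory.integrable_const _)
      (hint.mono_set (fun s hs => lt_of_lt_of_le one_pos hs.1.le)) measurableSet_Ioc ?_
    intro s hs
    have hs1 : 1 ≤ s := hs.1.le
    have hs2 : s ≤ 2 := hs.2
    have h4 : s ^ 4 ≤ 16 := by
      calc s ^ 4 ≤ 2 ^ 4 := pow_le_pow_left₀ (by linarith) hs2 4
      _ = 16 := by norm_num
    have hb : 2 * s + s ^ 4 ≤ 20 := by linarith
    rw [show -(1:ℝ)/2 = -(1/2) by norm_num, Real.rpow_neg (by norm_num),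
      Real.rpow_neg (by positivity)]
    apply inv_anti₀
    · exact Real.rpow_pos_of_pos (by positivity) _
    · exact Real.rpow_le_rpow (by positivity) hb (by norm_num)
  have h2 : ∫ s in Set.Ioc (1:ℝ) 2, ((20:ℝ)) ^ (-(1:ℝ)/2) = (20:ℝ) ^ (-(1:ℝ)/2) := by
    rw [MeasureTheory.setIntegral_const, Real.volume_real_Ioc, smul_eq_mul]
    norm_num
  have h3 : ∫ s in Set.Ioc (1:ℝ) 2, (2 * s + s ^ 4) ^ (-(1:ℝ)/2)
      ≤ ∫ s in Set.Ioi (0:ℝ), (2 * s + s ^ 4) ^ (-(1:ℝ)/2) := by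
    refine MeasureTheory.setIntegral_mono_set hint ?_ ?_
    · refine (MeasureTheory.ae_restrict_iff' measurableSet_Ioi).2 ?_
      filter_upwards with s hs
      have hs0 : (0:ℝ) < s := Set.mem_Ioi.1 hs
      exact Real.rpow_nonneg (by nlinarith [pow_pos hs0 4]) _
    · exact HasSubset.Subset.eventuallyLE (fun s hs => lt_of_lt_of_le one_pos hs.1.le)
  have h20 : (0:ℝ) < (20:ℝ) ^ (-(1:ℝ)/2) := Real.rpow_pos_of_pos (by norm_num) _
  nlinarith [h1, h2, h3]

lemma phiW_integral : ∫ s in Set.Ioi (0:ℝ), phiW s = w0 := by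
  have hcv := MeasureTheory.integral_comp_mul_left_Ioi (g := phiW) (a := 0) (b := 4)
    (by norm_num)
  have heq : ∀ s ∈ Set.Ioi (0:ℝ), phiW (4 * s) = (2 * s + s ^ 4) ^ (-(1:ℝ)/2) := by
    intro s hs
    have hs0 : (0:ℝ) < s := hs
    have hpos : (0:ℝ) < 2 * s + s ^ 4 := by positivity
    unfold phiW
    have e1 : 2 * (4 * s) + (4 * s) ^ 4 / 64 = 4 * (2 * s + s ^ 4) := by ring
    rw [e1, show (4:ℝ) * (2 * s + s ^ 4) = 2 ^ 2 * (2 * s + s ^ 4) by norm_num,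
      Real.sqrt_mul (by positivity), Real.sqrt_sq (by norm_num : (0:ℝ) ≤ 2)]
    rw [show -(1:ℝ)/2 = -(1/2) by norm_num, Real.rpow_neg hpos.le, ← Real.sqrt_eq_rpow]
    rw [eq_comm, inv_eq_iff_eq_inv, eq_comm]
    field_simp
  have h2 : ∫ s in Set.Ioi (0:ℝ), phiW (4 * s)
      = ∫ s in Set.Ioi (0:ℝ), (2 * s + s ^ 4) ^ (-(1:ℝ)/2) :=
    MeasureTheory.setIntegral_congr_fun measurableSet_Ioi heq
  rw [h2] at hcv
  rw [show (4:ℝ) * 0 = 0 by norm_num] at hcv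
  unfold w0
  rw [hcv, smul_eq_mul]
  ring

lemma tendsto_mu0 : Tendsto muW (𝓝[>] (0:ℝ)) (𝓝 0) := by
  have hs : Tendsto (fun x : ℝ => Real.sin (x / 2)) (𝓝[>] (0:ℝ)) (𝓝 0) := by
    have : Continuous (fun x : ℝ => Real.sin (x / 2)) :=
      Real.continuous_sin.comp (continuous_id.div_const 2)
    have h0 := this.tendsto 0
    simp only [zero_div, Real.sin_zero] at h0
    exact h0.mono_left nhdsWithin_le_nhds
  have hg : ContinuousAt (fun t : ℝ => t ^ ((1:ℝ)/3)) 0 :=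
    Real.continuousAt_rpow_const 0 _ (Or.inr (by norm_num))
  have hg0 : (0:ℝ) ^ ((1:ℝ)/3) = 0 := Real.zero_rpow (by norm_num)
  have := hg.tendsto.comp hs
  rw [hg0] at this
  exact this

lemma tendsto_sin_div : Tendsto (fun t : ℝ => Real.sin t / t) (𝓝[≠] (0:ℝ)) (𝓝 1) := by
  have h := hasDerivAt_iff_tendsto_slope.1 (Real.hasDerivAt_sin 0)
  rw [Real.cos_zero] at h
  refine h.congr (fun t => ?_)
  rw [slope_def_field, Real.sin_zero, sub_zero, sub_zero]

lemma GW_tendsto {s : ℝ} (hs : 0 < s) :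
    Tendsto (fun x => GW x s) (𝓝[>] (0:ℝ)) (𝓝 (phiW s)) := by
  have hmu0 := tendsto_mu0
  have hE1 : ∀ᶠ x in 𝓝[>] (0:ℝ), x ∈ Set.Ioc 0 (1/6:ℝ) :=
    Ioc_mem_nhdsGT_of_mem ⟨le_rfl, by norm_num⟩
  have hE2 : ∀ᶠ x in 𝓝[>] (0:ℝ), muW x < π / s :=
    (tendsto_order.1 hmu0).2 _ (by positivity)
  -- the nonnegative quotient
  set L : ℝ := (s^2/8)^2 + 2*s with hL
  have hLpos : 0 < L := by rw [hL]; positivity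
  set Q : ℝ → ℝ := fun x =>
    ((Real.cos (x/2) - Real.cos (muW x * s/2))/(muW x)^2)^2
      + 4 * Real.sin (muW x * s/2) / muW x with hQ
  -- eventual equality of GW with 2/√Q
  have hGW_eq : ∀ᶠ x in 𝓝[>] (0:ℝ), GW x s = 2 / Real.sqrt (Q x) := by
    filter_upwards [hE1, hE2] with x hx1 hx2
    have hmu := mu_pos hx1.1 hx1.2
    have hus : muW x * s < π := by
      rw [← lt_div_iff₀ hs] at *; exact hx2
    have hmem : s ∈ Set.Ioc 0 (2 * π / muW x) := by
      refine ⟨hs, ?_⟩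
      rw [le_div_iff₀ hmu]
      nlinarith [Real.pi_pos]
    unfold GW
    rw [Set.indicator_of_mem hmem]
    have hFp4 : Fp x (2 * π - muW x * s) = (muW x)^4 * Q x := by
      rw [Fp_reflect, hQ, ← mu_cube hx1.1 hx1.2]
      field_simp
    have h4 : Real.sqrt ((muW x)^4 * Q x) = (muW x)^2 * Real.sqrt (Q x) := by
      rw [show (muW x)^4 = ((muW x)^2)^2 by ring, Real.sqrt_mul (by positivity),
        Real.sqrt_sq (by positivity)]
    unfold K2
    rw [hFp4, h4]
    rw [show muW x ^2 * (2/((muW x)^2 * Real.sqrt (Q x))) =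
      (muW x^2 * 2)/(muW x^2 * Real.sqrt (Q x)) by ring]
    rw [mul_div_mul_left _ _ (pow_pos hmu 2).ne']
  -- positivity of mu eventually
  have hmu_pos_ev : ∀ᶠ x in 𝓝[>] (0:ℝ), 0 < muW x := by
    filter_upwards [hE1] with x hx; exact mu_pos hx.1 hx.2
  have hinner : ∀ c : ℝ, 0 < c → Tendsto (fun x => muW x * c) (𝓝[>] (0:ℝ)) (𝓝[≠] 0) := by
    intro c hc
    rw [tendsto_nhdsWithin_iff]
    constructor
    · have := hmu0.mul_const c; rwa [zero_mul] at this
    · filter_upwards [hmu_pos_ev] with x hx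
      exact (mul_pos hx hc).ne'
  have hsin1 : ∀ c : ℝ, 0 < c →
      Tendsto (fun x => Real.sin (muW x * c) / (muW x * c)) (𝓝[>] (0:ℝ)) (𝓝 1) :=
    fun c hc => tendsto_sin_div.comp (hinner c hc)
  -- B1 : second term of Q tends to 2s
  have hB1 : Tendsto (fun x => 4 * Real.sin (muW x * s/2) / muW x) (𝓝[>] (0:ℝ))
      (𝓝 (2*s)) := by
    have h2 : Tendsto (fun x => (2*s) * (Real.sin (muW x * (s/2)) / (muW x * (s/2))))
        (𝓝[>] (0:ℝ)) (𝓝 (2*s)) := by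
      have := (hsin1 (s/2) (by positivity)).const_mul (2*s)
      rwa [mul_one] at this
    apply Filter.Tendsto.congr' _ h2
    filter_upwards [hmu_pos_ev] with x hx
    rw [show muW x * s / 2 = muW x * (s/2) by ring]
    field_simp
    ring
  -- B2a : (1 - cos(μs/2))/μ² → s²/8
  have hB2a : Tendsto (fun x => (1 - Real.cos (muW x * s/2)) / (muW x)^2) (𝓝[>] (0:ℝ))
      (𝓝 (s^2/8)) := by
    have h2 : Tendsto (fun x => (s^2/8) *
        ((Real.sin (muW x * (s/4)) / (muW x * (s/4)))^2)) (𝓝[>] (0:ℝ)) (𝓝 (s^2/8)) := by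
      have := ((hsin1 (s/4) (by positivity)).pow 2).const_mul (s^2/8)
      rwa [one_pow, mul_one] at this
    apply Filter.Tendsto.congr' _ h2
    filter_upwards [hmu_pos_ev] with x hx
    have hcos : Real.sin (muW x * (s/4))^2 = 1/2 - Real.cos (muW x * s/2)/2 := by
      have h := Real.sin_sq_eq_half_sub (muW x * (s/4))
      rwa [show 2*(muW x * (s/4)) = muW x * s/2 by ring] at h
    have e1 : (s^2/8) * ((Real.sin (muW x*(s/4)) / (muW x*(s/4)))^2)
        = 2*Real.sin (muW x*(s/4))^2/(muW x)^2 := by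
      field_simp
      ring
    rw [e1, hcos]
    ring
  -- T1 : (1 - cos(x/2))/μ² → 0
  have hT1 : Tendsto (fun x => (1 - Real.cos (x/2)) / (muW x)^2) (𝓝[>] (0:ℝ)) (𝓝 0) := by
    have hg : Tendsto (fun x : ℝ => π^((2:ℝ)/3) * x^((4:ℝ)/3) / 8) (𝓝[>] (0:ℝ)) (𝓝 0) := by
      have hc : ContinuousAt (fun x : ℝ => x ^ ((4:ℝ)/3)) 0 :=
        Real.continuousAt_rpow_const 0 _ (Or.inr (by norm_num))
      have h0 : (0:ℝ) ^ ((4:ℝ)/3) = 0 := Real.zero_rpow (by norm_num)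
      have h1 : Tendsto (fun x : ℝ => x ^ ((4:ℝ)/3)) (𝓝[>] (0:ℝ)) (𝓝 0) := by
        have := hc.tendsto
        rw [h0] at this
        exact this.mono_left nhdsWithin_le_nhds
      have h2 := (h1.const_mul (π^((2:ℝ)/3))).div_const 8
      rw [mul_zero, zero_div] at h2
      exact h2
    refine squeeze_zero' ?_ ?_ hg
    · filter_upwards [hmu_pos_ev] with x hx
      have := Real.cos_le_one (x/2)
      exact div_nonneg (by linarith) (by positivity)
    · filter_upwards [hE1] with x hx
      have hx0 := hx.1
      have hcb : 1 - Real.cos (x/2) ≤ x^2/8 := by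
        have := Real.one_sub_sq_div_two_le_cos (x := x/2)
        nlinarith
      have hmu2 : (x/π)^((2:ℝ)/3) ≤ (muW x)^2 := by
        have hsg := sinx2_ge hx.1 hx.2
        have : (muW x)^2 = Real.sin (x/2) ^ ((2:ℝ)/3) := by
          unfold muW
          rw [← Real.rpow_natCast (Real.sin (x/2) ^ ((1:ℝ)/3)) 2,
            ← Real.rpow_mul (le_of_lt (sinx2_pos hx.1 hx.2))]
          norm_num
        rw [this]
        exact Real.rpow_le_rpow (by positivity) hsg (by norm_num)
      have hd : (0:ℝ) < (x/π)^((2:ℝ)/3) :=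
        Real.rpow_pos_of_pos (by positivity) _
      have step1 : (1 - Real.cos (x/2)) / (muW x)^2 ≤ (x^2/8) / ((x/π)^((2:ℝ)/3)) := by
        apply div_le_div₀ ?_ hcb hd hmu2
        positivity
      have step2 : (x^2/8) / ((x/π)^((2:ℝ)/3)) = π^((2:ℝ)/3) * x^((4:ℝ)/3) / 8 := by
        rw [Real.div_rpow hx0.le Real.pi_pos.le]
        have hx23 : (0:ℝ) < x ^ ((2:ℝ)/3) := Real.rpow_pos_of_pos hx0 _
        have hπ23 : (0:ℝ) < π ^ ((2:ℝ)/3) := Real.rpow_pos_of_pos Real.pi_pos _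
        have key : x ^ ((4:ℝ)/3) * x ^ ((2:ℝ)/3) = x ^ 2 := by
          rw [← Real.rpow_natCast x 2, ← Real.rpow_add hx0]
          norm_num
        field_simp
        rw [← key]
        ring
      rw [step2] at step1
      exact step1
  -- combine to get limit of Q
  have hB2 : Tendsto (fun x => (Real.cos (x/2) - Real.cos (muW x * s/2))/(muW x)^2)
      (𝓝[>] (0:ℝ)) (𝓝 (s^2/8)) := by
    have h := hB2a.sub hT1
    rw [sub_zero] at h
    refine h.congr (fun x => ?_)
    ring
  have hQt : Tendsto Q (𝓝[>] (0:ℝ)) (𝓝 L) := by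
    rw [hQ, hL]
    exact (hB2.pow 2).add hB1
  have hcont : ContinuousAt (fun q : ℝ => 2 / Real.sqrt q) L :=
    continuousAt_const.div (Real.continuous_sqrt.continuousAt)
      (Real.sqrt_pos.2 hLpos).ne'
  have hfin := hcont.tendsto.comp hQt
  have hphi : phiW s = 2 / Real.sqrt L := by
    unfold phiW
    rw [hL, show (s^2/8)^2 + 2*s = 2*s + s^4/64 by ring]
  rw [← hphi] at hfin
  exact Filter.Tendsto.congr' (hGW_eq.mono fun x hx => hx.symm) hfin


lemma GW_meas (x : ℝ) : Measurable (GW x) := by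
  unfold GW
  apply Measurable.indicator _ measurableSet_Ioc
  exact measurable_const.mul ((K2_meas x).comp
    (measurable_const.sub (measurable_id.const_mul (muW x))))

lemma GW_integral {x : ℝ} (hx0 : 0 < x) (hx1 : x ≤ 1/6) :
    ∫ s in Set.Ioi (0:ℝ), GW x s = muW x * VV x := by
  have hmu := mu_pos hx0 hx1
  have hT : (0:ℝ) ≤ 2 * π / muW x := by positivity
  -- step1: reduce indicator integral
  have h1 : ∫ s in Set.Ioi (0:ℝ), GW x s
      = ∫ s in Set.Ioc (0:ℝ) (2 * π / muW x),
          muW x ^ 2 * K2 x (2 * π - muW x * s) := by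
    unfold GW
    rw [MeasureTheory.integral_indicator measurableSet_Ioc]
    rw [MeasureTheory.Measure.restrict_restrict measurableSet_Ioc]
    rw [Set.inter_eq_self_of_subset_left Set.Ioc_subset_Ioi_self]
  have h2 : ∫ s in Set.Ioc (0:ℝ) (2 * π / muW x),
        muW x ^ 2 * K2 x (2 * π - muW x * s)
      = ∫ s in (0:ℝ)..(2 * π / muW x), muW x ^ 2 * K2 x (2 * π - muW x * s) := by
    rw [intervalIntegral.integral_of_le hT]
  have h3 : ∫ s in (0:ℝ)..(2 * π / muW x), muW x ^ 2 * K2 x (2 * π - muW x * s)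
      = muW x ^ 2 * ∫ s in (0:ℝ)..(2 * π / muW x), K2 x (2 * π - muW x * s) :=
    intervalIntegral.integral_const_mul _ _
  have h4 : ∫ s in (0:ℝ)..(2 * π / muW x), K2 x (2 * π - muW x * s)
      = (muW x)⁻¹ * VV x := by
    have := intervalIntegral.integral_comp_mul_left
      (a := 0) (b := 2 * π / muW x) (fun u => K2 x (2 * π - u)) hmu.ne'
    rw [mul_zero, mul_div_cancel₀ _ hmu.ne'] at this
    rw [this, smul_eq_mul, ← VV_reflect]
  rw [h1, h2, h3, h4]
  field_simp

lemma main_pos :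
    Tendsto (fun x : ℝ => |Real.sin (x / 2)| ^ (-(5:ℝ)/3) * Wper x)
      (𝓝[>] (0:ℝ)) (𝓝 w0) := by
  have hdct : Tendsto (fun x : ℝ => ∫ s in Set.Ioi (0:ℝ), GW x s) (𝓝[>] (0:ℝ))
      (𝓝 (∫ s in Set.Ioi (0:ℝ), phiW s)) := by
    refine MeasureTheory.tendsto_integral_filter_of_dominated_convergence GbW ?_ ?_ ?_ ?_
    · filter_upwards with x
      exact (GW_meas x).aestronglyMeasurable
    · filter_upwards [Ioc_mem_nhdsGT_of_mem
        (show (0:ℝ) ∈ Set.Ico 0 (1/6:ℝ) by constructor <;> norm_num)] with x hx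
      refine (MeasureTheory.ae_restrict_iff' measurableSet_Ioi).2 ?_
      filter_upwards with s hs
      rw [Real.norm_eq_abs, abs_of_nonneg (GW_nonneg x s)]
      exact GW_bound hx.1 hx.2 hs
    · exact GbW_integrable
    · refine (MeasureTheory.ae_restrict_iff' measurableSet_Ioi).2 ?_
      filter_upwards with s hs
      exact GW_tendsto hs
  rw [phiW_integral] at hdct
  apply Filter.Tendsto.congr' _ hdct
  filter_upwards [Ioc_mem_nhdsGT_of_mem
    (show (0:ℝ) ∈ Set.Ico 0 (1/6:ℝ) by constructor <;> norm_num)] with x hx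
  rw [GW_integral hx.1 hx.2]
  have hsin := sinx2_pos hx.1 hx.2
  have hx2pi : x ∈ II := by
    constructor
    · exact hx.1.le
    · nlinarith [Real.pi_gt_three, hx.2]
  unfold Wper WW
  rw [mod2pi_eq_self hx2pi, abs_of_pos hsin]
  have hmu : Real.sin (x/2) ^ (-(5:ℝ)/3) * Real.sin (x/2) ^ (2:ℕ) = muW x := by
    unfold muW
    rw [← Real.rpow_natCast (Real.sin (x/2)) 2, ← Real.rpow_add hsin]
    norm_num
  rw [show Real.sin (x/2) ^ (-(5:ℝ)/3) * (Real.sin (x/2) ^ 2 * VV x)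
    = (Real.sin (x/2) ^ (-(5:ℝ)/3) * Real.sin (x/2) ^ (2:ℕ)) * VV x by ring, hmu]

lemma abs_sin_even (x : ℝ) : |Real.sin (-x / 2)| = |Real.sin (x / 2)| := by
  rw [show -x/2 = -(x/2) by ring, Real.sin_neg, abs_neg]

lemma main_limit :
    Tendsto (fun x : ℝ => |Real.sin (x / 2)| ^ (-(5:ℝ)/3) * Wper x)
      (𝓝[≠] (0:ℝ)) (𝓝 w0) := by
  have hset : ({(0:ℝ)}ᶜ : Set ℝ) = Set.Iio 0 ∪ Set.Ioi 0 := (Set.Iio_union_Ioi).symm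
  rw [show (𝓝[≠] (0:ℝ)) = 𝓝[Set.Iio 0 ∪ Set.Ioi 0] (0:ℝ) by rw [← hset],
    nhdsWithin_union, Filter.tendsto_sup]
  constructor
  · have hneg : Tendsto (fun x : ℝ => -x) (𝓝[<] (0:ℝ)) (𝓝[>] (0:ℝ)) := by
      rw [tendsto_nhdsWithin_iff]
      constructor
      · have := (continuous_neg.tendsto (0:ℝ)).mono_left (nhdsWithin_le_nhds (s := Set.Iio 0))
        rwa [neg_zero] at this
      · filter_upwards [self_mem_nhdsWithin] with x hx
        simp only [Set.mem_Iio] at hx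
        exact Set.mem_Ioi.2 (by linarith)
    have hcomp := main_pos.comp hneg
    refine hcomp.congr (fun x => ?_)
    simp only [Function.comp_apply]
    rw [abs_sin_even, Wper_even]
  · exact main_pos

lemma abs_sin_sym (y : ℝ) : |Real.sin ((2 * π - y) / 2)| = |Real.sin (y / 2)| := by
  rw [show (2 * π - y)/2 = π - y/2 by ring, Real.sin_pi_sub]

lemma f_continuousAt {x : ℝ} (hx : x ∈ Ioo 0 (2 * π)) :
    ContinuousAt (fun y : ℝ => |Real.sin (y / 2)| ^ (-(5:ℝ)/3) * Wper y) x := by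
  have hsin : 0 < Real.sin (x / 2) :=
    Real.sin_pos_of_pos_of_lt_pi (by linarith [hx.1]) (by linarith [hx.2])
  have h1 : ContinuousAt (fun y : ℝ => |Real.sin (y / 2)| ^ (-(5:ℝ)/3)) x := by
    have hbase : Continuous (fun y : ℝ => |Real.sin (y / 2)|) :=
      (Real.continuous_sin.comp (continuous_id.div_const 2)).abs
    exact ContinuousAt.comp (x := x) (g := fun t : ℝ => t ^ (-(5:ℝ)/3))
      (Real.continuousAt_rpow_const _ _ (Or.inl (by positivity))) hbase.continuousAt
  have h2 : ContinuousAt Wper x := by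
    refine (WW_continuousAt hx).congr ?_
    filter_upwards [isOpen_Ioo.mem_nhds hx] with y hy
    unfold Wper
    rw [mod2pi_eq_self ⟨hy.1.le, hy.2⟩]
  exact h1.mul h2

lemma Wper_eq_WW {x : ℝ} (hx : x ∈ II) : Wper x = WW x := by
  unfold Wper; rw [mod2pi_eq_self hx]

lemma WW_zero : WW 0 = 0 := by
  unfold WW
  rw [zero_div, Real.sin_zero]
  ring

lemma Wper_bounds : ∃ c₁ > (0:ℝ), ∃ c₂ > (0:ℝ), ∀ x : ℝ,
    c₁ * |Real.sin (x / 2)| ^ ((5 : ℝ) / 3) ≤ Wper x ∧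
      Wper x ≤ c₂ * |Real.sin (x / 2)| ^ ((5 : ℝ) / 3) := by
  set f : ℝ → ℝ := fun y => |Real.sin (y / 2)| ^ (-(5:ℝ)/3) * Wper y with hf
  have hw0 := w0_pos
  have hev : ∀ᶠ x in 𝓝[>] (0:ℝ), f x ∈ Set.Ioo (w0/2) (2*w0) :=
    main_pos (Ioo_mem_nhds (by linarith) (by linarith))
  rw [Filter.eventually_iff, mem_nhdsGT_iff_exists_Ioc_subset] at hev
  obtain ⟨δ, hδ, hsub⟩ := hev
  simp only [Set.mem_Ioi] at hδ
  set δ' : ℝ := min δ 1 with hδ'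
  have hδ'0 : 0 < δ' := lt_min hδ one_pos
  have hδ'1 : δ' ≤ 1 := min_le_right _ _
  have hδ'δ : δ' ≤ δ := min_le_left _ _
  have hπ3 := Real.pi_gt_three
  -- bounds on the compact middle
  have hKcont : ContinuousOn f (Icc δ' (2 * π - δ')) := by
    intro y hy
    exact (f_continuousAt ⟨lt_of_lt_of_le hδ'0 hy.1, lt_of_le_of_lt hy.2 (by linarith)⟩
      ).continuousWithinAt
  have hKne : (Icc δ' (2 * π - δ')).Nonempty := ⟨δ', le_rfl, by linarith⟩
  obtain ⟨p, hp, hpmin⟩ := isCompact_Icc.exists_isMinOn hKne hKcont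
  obtain ⟨q, hq, hqmax⟩ := isCompact_Icc.exists_isMaxOn hKne hKcont
  have hfpos : ∀ y, y ∈ Icc δ' (2 * π - δ') → 0 < f y := by
    intro y hy
    have hy' : y ∈ Ioo 0 (2 * π) :=
      ⟨lt_of_lt_of_le hδ'0 hy.1, lt_of_le_of_lt hy.2 (by linarith)⟩
    have hsin : 0 < Real.sin (y / 2) :=
      Real.sin_pos_of_pos_of_lt_pi (by linarith [hy'.1]) (by linarith [hy'.2])
    have hW : 0 < Wper y := by
      rw [Wper_eq_WW ⟨hy'.1.le, hy'.2⟩]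
      unfold WW
      have := VV_lower hy'
      nlinarith [Real.pi_pos]
    exact mul_pos (Real.rpow_pos_of_pos (by rwa [abs_of_pos hsin]) _) hW
  set c₁ : ℝ := min (w0/2) (f p) with hc₁
  set c₂ : ℝ := max (2*w0) (f q) with hc₂
  have hc₁pos : 0 < c₁ := lt_min (by linarith) (hfpos p hp)
  have hc₂pos : 0 < c₂ := lt_of_lt_of_le (by linarith) (le_max_left _ _)
  -- the bound in terms of f, for y in the fundamental cell
  have hfy : ∀ y, y ∈ II → 0 < y → c₁ ≤ f y ∧ f y ≤ c₂ := by
    intro y hy hy0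
    rcases le_or_gt y δ' with h1 | h1
    · have hIoo : f y ∈ Set.Ioo (w0/2) (2*w0) := hsub ⟨hy0, le_trans h1 hδ'δ⟩
      exact ⟨le_trans (min_le_left _ _) hIoo.1.le,
        le_trans hIoo.2.le (le_max_left _ _)⟩
    · rcases le_or_gt y (2 * π - δ') with h2 | h2
      · exact ⟨le_trans (min_le_right _ _) (isMinOn_iff.1 hpmin y ⟨h1.le, h2⟩),
          le_trans (isMaxOn_iff.1 hqmax y ⟨h1.le, h2⟩) (le_max_right _ _)⟩
      · -- reflect
        have hyy : 2 * π - y ∈ Set.Ioc 0 δ := by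
          constructor
          · linarith [hy.2]
          · linarith
        have hrefl : f (2 * π - y) = f y := by
          rw [hf]
          simp only
          rw [abs_sin_sym, Wper_sym]
        have hIoo : f (2 * π - y) ∈ Set.Ioo (w0/2) (2*w0) := hsub hyy
        rw [hrefl] at hIoo
        exact ⟨le_trans (min_le_left _ _) hIoo.1.le,
          le_trans hIoo.2.le (le_max_left _ _)⟩
  refine ⟨c₁, hc₁pos, c₂, hc₂pos, fun x => ?_⟩
  -- reduce to fundamental cell
  have hWx : Wper x = Wper (mod2pi x) := by
    unfold Wper
    rw [mod2pi_eq_self (mod2pi_mem x)]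
  have hsx : |Real.sin (x / 2)| = |Real.sin (mod2pi x / 2)| := (abs_sin_mod2pi x).symm
  rw [hWx, hsx]
  set y := mod2pi x with hy
  have hymem := mod2pi_mem x
  rcases eq_or_lt_of_le hymem.1 with h0 | h0
  · rw [← hy] at h0
    rw [← h0]
    have : |Real.sin ((0:ℝ) / 2)| = 0 := by
      rw [zero_div, Real.sin_zero, abs_zero]
    rw [this, Real.zero_rpow (by norm_num), mul_zero, mul_zero]
    rw [Wper_eq_WW ⟨le_rfl, Real.two_pi_pos⟩, WW_zero]
    exact ⟨le_rfl, le_rfl⟩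
  · obtain ⟨hfy1, hfy2⟩ := hfy y hymem h0
    have hsiny : 0 < Real.sin (y / 2) :=
      Real.sin_pos_of_pos_of_lt_pi (by linarith) (by linarith [hymem.2])
    have hA : 0 < |Real.sin (y / 2)| ^ ((5:ℝ)/3) :=
      Real.rpow_pos_of_pos (by rwa [abs_of_pos hsiny]) _
    have hfyeq : f y = Wper y / |Real.sin (y / 2)| ^ ((5:ℝ)/3) := by
      rw [hf]
      simp only
      rw [show -(5:ℝ)/3 = -((5:ℝ)/3) by norm_num, Real.rpow_neg (abs_nonneg _)]
      ring
    rw [hfyeq] at hfy1 hfy2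
    constructor
    · rw [le_div_iff₀ hA] at hfy1
      linarith [hfy1]
    · rw [div_le_iff₀ hA] at hfy2
      linarith [hfy2]

lemma Wper_continuous : Continuous Wper := by
  obtain ⟨c₁, hc₁, c₂, hc₂, hbd⟩ := Wper_bounds
  rw [continuous_iff_continuousAt]
  intro x₀
  rcases eq_or_lt_of_le (mod2pi_mem x₀).1 with h0 | h0
  · -- x₀ is a multiple of 2π
    have hx₀ : x₀ = 2 * π * (⌊x₀ / (2 * π)⌋ : ℝ) := by
      have : mod2pi x₀ = 0 := h0.symm
      unfold mod2pi at this
      linarith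
    have hW0 : Wper x₀ = 0 := by
      unfold Wper
      rw [← h0, WW_zero]
    have hg : Tendsto (fun x : ℝ => c₂ * |Real.sin (x / 2)| ^ ((5:ℝ)/3)) (𝓝 x₀)
        (𝓝 0) := by
      have hcont : Continuous (fun x : ℝ => c₂ * |Real.sin (x / 2)| ^ ((5:ℝ)/3)) := by
        refine continuous_const.mul ?_
        have h53 : Continuous (fun t : ℝ => t ^ ((5:ℝ)/3)) :=
          continuous_iff_continuousAt.2
            (fun t => Real.continuousAt_rpow_const t _ (Or.inr (by norm_num)))
        exact h53.comp (Real.continuous_sin.comp (continuous_id.div_const 2)).abs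
      have hval : c₂ * |Real.sin (x₀ / 2)| ^ ((5:ℝ)/3) = 0 := by
        have : Real.sin (x₀ / 2) = 0 := by
          rw [hx₀, show 2 * π * (⌊x₀ / (2 * π)⌋ : ℝ) / 2 = (⌊x₀ / (2 * π)⌋ : ℝ) * π by ring]
          exact Real.sin_int_mul_pi _
        rw [this, abs_zero, Real.zero_rpow (by norm_num), mul_zero]
      have := hcont.tendsto x₀
      rwa [hval] at this
    have hT : Tendsto Wper (𝓝 x₀) (𝓝 0) :=
      squeeze_zero (fun t => Wper_nonneg t) (fun t => (hbd t).2) hg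
    unfold ContinuousAt
    rwa [hW0]
  · -- interior point
    set k : ℤ := ⌊x₀ / (2 * π)⌋ with hk
    have hx₀ : x₀ = mod2pi x₀ + 2 * π * (k : ℝ) := by unfold mod2pi; ring
    have hmem := mod2pi_mem x₀
    have hU : ∀ x ∈ Ioo (2 * π * (k:ℝ)) (2 * π * (k:ℝ) + 2 * π), mod2pi x = x - 2 * π * (k:ℝ) := by
      intro x hx
      conv_lhs => rw [show x = (x - 2 * π * (k:ℝ)) + 2 * π * (k:ℝ) by ring]
      rw [mod2pi_add_int, mod2pi_eq_self ⟨by linarith [hx.1], by linarith [hx.2]⟩]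
    have hx₀U : x₀ ∈ Ioo (2 * π * (k:ℝ)) (2 * π * (k:ℝ) + 2 * π) := by
      constructor
      · rw [hx₀]; linarith
      · rw [hx₀]; linarith [hmem.2]
    have hWWc : ContinuousAt (fun x : ℝ => WW (x - 2 * π * (k:ℝ))) x₀ := by
      have hin : ContinuousAt (fun x : ℝ => x - 2 * π * (k:ℝ)) x₀ :=
        (continuous_id.sub continuous_const).continuousAt
      have hWWa : ContinuousAt WW (x₀ - 2 * π * (k:ℝ)) := by
        have e : x₀ - 2 * π * (k:ℝ) = mod2pi x₀ := by
          unfold mod2pi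
          rw [hk]
        rw [e]
        exact WW_continuousAt ⟨h0, hmem.2⟩
      exact ContinuousAt.comp (x := x₀) hWWa hin
    refine hWWc.congr ?_
    filter_upwards [isOpen_Ioo.mem_nhds hx₀U] with x hx
    unfold Wper
    rw [hU x hx]

/-- **Lemma 4.1.**  `W` is continuous, symmetric under `x ↦ 2π − x`, comparable to
`|sin(x/2)|^{5/3}` from above and below, and `|sin(x/2)|^{−5/3} W(x) → w₀ ∈ (0,∞)` as
`x → 0`. -/
theorem W_asymptotics :
    Continuous Wper ∧
    (∀ x : ℝ, Wper (2 * π - x) = Wper x) ∧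
    (∃ c₁ > (0 : ℝ), ∃ c₂ > (0 : ℝ), ∀ x : ℝ,
      c₁ * |Real.sin (x / 2)| ^ ((5 : ℝ) / 3) ≤ Wper x ∧
        Wper x ≤ c₂ * |Real.sin (x / 2)| ^ ((5 : ℝ) / 3)) ∧
    IntegrableOn (fun s : ℝ => (2 * s + s ^ 4) ^ (-(1 : ℝ) / 2)) (Set.Ioi 0) ∧
    0 < w0 ∧
    Tendsto (fun x : ℝ => |Real.sin (x / 2)| ^ (-(5 : ℝ) / 3) * Wper x)
      (𝓝[≠] (0 : ℝ)) (𝓝 w0) := by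
  exact ⟨Wper_continuous, Wper_sym, Wper_bounds, w_integrand_integrable, w0_pos,
    main_limit⟩
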